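/- Suppose Y₁, Y₂ ∈ 𝔤 are elements whose images in the quotient 𝔤/[𝔤,𝔤] form a basis (equivalently, in coordinates, (Y₁)₁(Y₂)₂ − (Y₁)₂(Y₂)₁ ≠ 0). Then there exists a unique Lie algebra automorphism φ : 𝔤 → 𝔤 such that φ(X₁) = Y₁ and φ(X₂) = Y₂; this automorphism need not preserve the grading. -/

import Mathlib

/-- The Lie bracket of the 5-dimensional nilpotent Lie algebra `𝔤` of type `(2,3,5)` on
`ℝ⁵`: `[x,y] = (0, 0, x₁y₂ − x₂y₁, x₁y₃ − x₃y₁, x₂y₃ − x₃y₂)`, corresponding to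
`[X₁,X₂] = X₃`, `[X₁,X₃] = X₄`, `[X₂,X₃] = X₅`. -/
def gBracket (x y : ℝ × ℝ × ℝ × ℝ × ℝ) : ℝ × ℝ × ℝ × ℝ × ℝ :=
  (0, 0, x.1 * y.2.1 - x.2.1 * y.1, x.1 * y.2.2.1 - x.2.2.1 * y.1,
    x.2.1 * y.2.2.1 - x.2.2.1 * y.2.1)

/-- The forward map of the automorphism: sends `X₁ ↦ Y₁`, `X₂ ↦ Y₂`,
`X₃ ↦ [Y₁,Y₂]`, `X₄ ↦ [Y₁,[Y₁,Y₂]]`, `X₅ ↦ [Y₂,[Y₁,Y₂]]`. -/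
def gPhiFun : (ℝ × ℝ × ℝ × ℝ × ℝ) → (ℝ × ℝ × ℝ × ℝ × ℝ) → (ℝ × ℝ × ℝ × ℝ × ℝ) →
    (ℝ × ℝ × ℝ × ℝ × ℝ)
  | (a1, a2, a3, a4, a5), (b1, b2, b3, b4, b5), (x1, x2, x3, x4, x5) =>
    (a1 * x1 + b1 * x2,
     a2 * x1 + b2 * x2,
     a3 * x1 + b3 * x2 + (a1 * b2 - a2 * b1) * x3,
     a4 * x1 + b4 * x2 + (a1 * b3 - a3 * b1) * x3
       + a1 * (a1 * b2 - a2 * b1) * x4 + b1 * (a1 * b2 - a2 * b1) * x5,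
     a5 * x1 + b5 * x2 + (a2 * b3 - a3 * b2) * x3
       + a2 * (a1 * b2 - a2 * b1) * x4 + b2 * (a1 * b2 - a2 * b1) * x5)

/-- The inverse map of the automorphism. -/
noncomputable def gPsiFun : (ℝ × ℝ × ℝ × ℝ × ℝ) → (ℝ × ℝ × ℝ × ℝ × ℝ) →
    (ℝ × ℝ × ℝ × ℝ × ℝ) → (ℝ × ℝ × ℝ × ℝ × ℝ)
  | (a1, a2, a3, a4, a5), (b1, b2, b3, b4, b5), (z1, z2, z3, z4, z5) =>
    let d := a1 * b2 - a2 * b1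
    let x1 := (b2 * z1 - b1 * z2) / d
    let x2 := (a1 * z2 - a2 * z1) / d
    let x3 := (z3 - a3 * x1 - b3 * x2) / d
    let r4 := z4 - a4 * x1 - b4 * x2 - (a1 * b3 - a3 * b1) * x3
    let r5 := z5 - a5 * x1 - b5 * x2 - (a2 * b3 - a3 * b2) * x3
    (x1, x2, x3, (b2 * r4 - b1 * r5) / d ^ 2, (a1 * r5 - a2 * r4) / d ^ 2)

/-- Every element of `ℝ⁵` is the obvious combination of the standard basis vectors. -/
lemma g_decomp (x : ℝ × ℝ × ℝ × ℝ × ℝ) :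
    x = x.1 • ((1 : ℝ), (0 : ℝ), (0 : ℝ), (0 : ℝ), (0 : ℝ))
      + x.2.1 • ((0 : ℝ), (1 : ℝ), (0 : ℝ), (0 : ℝ), (0 : ℝ))
      + x.2.2.1 • ((0 : ℝ), (0 : ℝ), (1 : ℝ), (0 : ℝ), (0 : ℝ))
      + x.2.2.2.1 • ((0 : ℝ), (0 : ℝ), (0 : ℝ), (1 : ℝ), (0 : ℝ))
      + x.2.2.2.2 • ((0 : ℝ), (0 : ℝ), (0 : ℝ), (0 : ℝ), (1 : ℝ)) := by
  obtain ⟨x1, x2, x3, x4, x5⟩ := x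
  simp [Prod.ext_iff]

set_option maxHeartbeats 2000000 in
/-- The linear automorphism of `𝔤` sending `X₁ ↦ Y₁`, `X₂ ↦ Y₂`. -/
noncomputable def gPhi (Y₁ Y₂ : ℝ × ℝ × ℝ × ℝ × ℝ)
    (h : Y₁.1 * Y₂.2.1 - Y₁.2.1 * Y₂.1 ≠ 0) :
    (ℝ × ℝ × ℝ × ℝ × ℝ) ≃ₗ[ℝ] (ℝ × ℝ × ℝ × ℝ × ℝ) where
  toFun := gPhiFun Y₁ Y₂
  invFun := gPsiFun Y₁ Y₂
  map_add' x y := by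
    obtain ⟨a1, a2, a3, a4, a5⟩ := Y₁
    obtain ⟨b1, b2, b3, b4, b5⟩ := Y₂
    obtain ⟨x1, x2, x3, x4, x5⟩ := x
    obtain ⟨y1, y2, y3, y4, y5⟩ := y
    simp only [gPhiFun, Prod.mk_add_mk, Prod.mk.injEq]
    refine ⟨by ring, by ring, by ring, by ring, by ring⟩
  map_smul' c x := by
    obtain ⟨a1, a2, a3, a4, a5⟩ := Y₁
    obtain ⟨b1, b2, b3, b4, b5⟩ := Y₂
    obtain ⟨x1, x2, x3, x4, x5⟩ := x
    simp only [gPhiFun, Prod.smul_mk, smul_eq_mul, RingHom.id_apply, Prod.mk.injEq]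
    refine ⟨by ring, by ring, by ring, by ring, by ring⟩
  left_inv x := by
    obtain ⟨a1, a2, a3, a4, a5⟩ := Y₁
    obtain ⟨b1, b2, b3, b4, b5⟩ := Y₂
    obtain ⟨x1, x2, x3, x4, x5⟩ := x
    simp only at h
    simp only [gPhiFun, gPsiFun, Prod.mk.injEq]
    obtain ⟨d, hd⟩ : ∃ d, d = a1 * b2 - a2 * b1 := ⟨_, rfl⟩
    rw [← hd] at h ⊢
    refine ⟨by field_simp; rw [hd]; ring, by field_simp; rw [hd]; ring, by field_simp; rw [hd]; ring,
      by field_simp; rw [hd]; ring, by field_simp; rw [hd]; ring⟩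
  right_inv z := by
    obtain ⟨a1, a2, a3, a4, a5⟩ := Y₁
    obtain ⟨b1, b2, b3, b4, b5⟩ := Y₂
    obtain ⟨z1, z2, z3, z4, z5⟩ := z
    simp only at h
    simp only [gPhiFun, gPsiFun, Prod.mk.injEq]
    obtain ⟨d, hd⟩ : ∃ d, d = a1 * b2 - a2 * b1 := ⟨_, rfl⟩
    rw [← hd] at h ⊢
    refine ⟨by field_simp; rw [hd]; ring, by field_simp; rw [hd]; ring, by field_simp; rw [hd]; ring,
      by field_simp; rw [hd]; ring, by field_simp; rw [hd]; ring⟩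

/-- If `Y₁, Y₂ ∈ 𝔤` project to a basis of `𝔤/[𝔤,𝔤]` (in coordinates:
`(Y₁)₁(Y₂)₂ − (Y₁)₂(Y₂)₁ ≠ 0`), then there is a unique Lie algebra automorphism
`φ : 𝔤 → 𝔤` (a linear automorphism preserving the bracket) with `φ(X₁) = Y₁` and
`φ(X₂) = Y₂`. -/
lemma gPhi_apply (Y₁ Y₂ : ℝ × ℝ × ℝ × ℝ × ℝ)
    (h : Y₁.1 * Y₂.2.1 - Y₁.2.1 * Y₂.1 ≠ 0) (x : ℝ × ℝ × ℝ × ℝ × ℝ) :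
    gPhi Y₁ Y₂ h x = gPhiFun Y₁ Y₂ x := rfl

theorem stmt14 (Y₁ Y₂ : ℝ × ℝ × ℝ × ℝ × ℝ)
    (h : Y₁.1 * Y₂.2.1 - Y₁.2.1 * Y₂.1 ≠ 0) :
    ∃! φ : (ℝ × ℝ × ℝ × ℝ × ℝ) ≃ₗ[ℝ] (ℝ × ℝ × ℝ × ℝ × ℝ),
      (∀ x y, φ (gBracket x y) = gBracket (φ x) (φ y)) ∧
        φ (1, 0, 0, 0, 0) = Y₁ ∧ φ (0, 1, 0, 0, 0) = Y₂ := by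
  refine ⟨gPhi Y₁ Y₂ h, ⟨?_, ?_, ?_⟩, ?_⟩
  · intro x y
    obtain ⟨a1, a2, a3, a4, a5⟩ := Y₁
    obtain ⟨b1, b2, b3, b4, b5⟩ := Y₂
    obtain ⟨x1, x2, x3, x4, x5⟩ := x
    obtain ⟨y1, y2, y3, y4, y5⟩ := y
    simp only [gPhi_apply, gPhiFun, gBracket, Prod.mk.injEq]
    refine ⟨by ring, by ring, by ring, by ring, by ring⟩
  · obtain ⟨a1, a2, a3, a4, a5⟩ := Y₁
    obtain ⟨b1, b2, b3, b4, b5⟩ := Y₂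
    simp only [gPhi_apply, gPhiFun, Prod.mk.injEq]
    refine ⟨by ring, by ring, by ring, by ring, by ring⟩
  · obtain ⟨a1, a2, a3, a4, a5⟩ := Y₁
    obtain ⟨b1, b2, b3, b4, b5⟩ := Y₂
    simp only [gPhi_apply, gPhiFun, Prod.mk.injEq]
    refine ⟨by ring, by ring, by ring, by ring, by ring⟩
  · rintro ψ ⟨hb, h1, h2⟩
    apply LinearEquiv.ext
    intro x
    have e3 : ψ ((0 : ℝ), (0 : ℝ), (1 : ℝ), (0 : ℝ), (0 : ℝ)) = gBracket Y₁ Y₂ := by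
      have : gBracket ((1 : ℝ), (0 : ℝ), (0 : ℝ), (0 : ℝ), (0 : ℝ))
          ((0 : ℝ), (1 : ℝ), (0 : ℝ), (0 : ℝ), (0 : ℝ))
          = ((0 : ℝ), (0 : ℝ), (1 : ℝ), (0 : ℝ), (0 : ℝ)) := by
        simp [gBracket]
      rw [← this, hb, h1, h2]
    have e4 : ψ ((0 : ℝ), (0 : ℝ), (0 : ℝ), (1 : ℝ), (0 : ℝ))
        = gBracket Y₁ (gBracket Y₁ Y₂) := by
      have : gBracket ((1 : ℝ), (0 : ℝ), (0 : ℝ), (0 : ℝ), (0 : ℝ))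
          ((0 : ℝ), (0 : ℝ), (1 : ℝ), (0 : ℝ), (0 : ℝ))
          = ((0 : ℝ), (0 : ℝ), (0 : ℝ), (1 : ℝ), (0 : ℝ)) := by
        simp [gBracket]
      rw [← this, hb, h1, e3]
    have e5 : ψ ((0 : ℝ), (0 : ℝ), (0 : ℝ), (0 : ℝ), (1 : ℝ))
        = gBracket Y₂ (gBracket Y₁ Y₂) := by
      have : gBracket ((0 : ℝ), (1 : ℝ), (0 : ℝ), (0 : ℝ), (0 : ℝ))
          ((0 : ℝ), (0 : ℝ), (1 : ℝ), (0 : ℝ), (0 : ℝ))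
          = ((0 : ℝ), (0 : ℝ), (0 : ℝ), (0 : ℝ), (1 : ℝ)) := by
        simp [gBracket]
      rw [← this, hb, h2, e3]
    rw [g_decomp x]
    simp only [map_add, map_smul, h1, h2, e3, e4, e5]
    obtain ⟨a1, a2, a3, a4, a5⟩ := Y₁
    obtain ⟨b1, b2, b3, b4, b5⟩ := Y₂
    obtain ⟨x1, x2, x3, x4, x5⟩ := x
    simp only [gPhi_apply, gPhiFun, gBracket, Prod.smul_mk, smul_eq_mul, Prod.mk_add_mk, Prod.mk.injEq]
    refine ⟨by ring, by ring, by ring, by ring, by ring⟩
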